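/- Let F be a twisting cocycle for the Hopf algebra H and let (E,ρ) be an adjoint H-module algebra. Then the map φ(a) := Σ ad(F₁)(a)·ρ(F₂) intertwines the adjoint actions of H and of the twisted Hopf algebra H̃ on E: for all h ∈ H and a ∈ E, Σ ρ(h⁽¹̃⁾)·φ(a)·ρ(γ̃(h⁽²̃⁾)) = φ( Σ ρ(h⁽¹⁾)·a·ρ(γ(h⁽²⁾)) ). -/

import Mathlib

open TensorProduct

noncomputable section

variable (k : Type*) [Field k] (H : Type*) [Ring H] [HopfAlgebra k H]

/-- The comultiplication of `H` as a linear map. -/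
noncomputable def comulL : H →ₗ[k] H ⊗[k] H := Coalgebra.comul

/-- The counit of `H` as a linear map. -/
noncomputable def counitL : H →ₗ[k] k := Coalgebra.counit

/-- The antipode of `H`. -/
noncomputable def anti : H →ₗ[k] H := HopfAlgebra.antipode (R := k)

/-- `F` together with its inverse `Finv` is a twisting (Drinfeld) cocycle:
`F` is invertible, `(Δ⊗id)(F)·(F⊗1) = (id⊗Δ)(F)·(1⊗F)` and `(ε⊗id)(F) = 1 = (id⊗ε)(F)`. -/
def IsCocycle (F Finv : H ⊗[k] H) : Prop :=
  F * Finv = 1 ∧ Finv * F = 1 ∧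
  (TensorProduct.assoc k H H H) ((TensorProduct.map (comulL k H) LinearMap.id F) * (F ⊗ₜ 1))
    = (TensorProduct.map LinearMap.id (comulL k H) F) * ((1 : H) ⊗ₜ F) ∧
  (TensorProduct.lid k H) (TensorProduct.map (counitL k H) LinearMap.id F) = 1 ∧
  (TensorProduct.rid k H) (TensorProduct.map LinearMap.id (counitL k H) F) = 1

/-- `ϑ = Σ γ(F₁)F₂`. -/
noncomputable def theta (F : H ⊗[k] H) : H :=
  LinearMap.mul' k H (TensorProduct.map (anti k H) LinearMap.id F)

/-- `ζ = Σ F̄₂ γ⁻¹(F̄₁)`, where `γinv` is the inverse of the antipode and `Finv = Σ F̄₁⊗F̄₂`. -/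
noncomputable def zeta (γinv : H →ₗ[k] H) (Finv : H ⊗[k] H) : H :=
  LinearMap.mul' k H (TensorProduct.map LinearMap.id γinv ((TensorProduct.comm k H H) Finv))

/-- `R` (with inverse `Rinv`) is a triangular structure: `R` is invertible,
`R Δ(h) = Δᵒᵖ(h) R`, the two hexagon identities `(Δ⊗id)(R) = R₁₃R₂₃`,
`(id⊗Δ)(R) = R₁₃R₁₂` hold, and `R₂₁ R = 1`. -/
def IsTriangular (R Rinv : H ⊗[k] H) : Prop :=
  R * Rinv = 1 ∧ Rinv * R = 1 ∧
  (∀ h : H, R * comulL k H h = (TensorProduct.comm k H H) (comulL k H h) * R) ∧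
  (TensorProduct.assoc k H H H) (TensorProduct.map (comulL k H) LinearMap.id R)
    = (TensorProduct.map LinearMap.id (TensorProduct.mk k H H 1) R) * ((1 : H) ⊗ₜ R) ∧
  (TensorProduct.map LinearMap.id (comulL k H) R)
    = (TensorProduct.map LinearMap.id (TensorProduct.mk k H H 1) R) *
      ((TensorProduct.assoc k H H H) (R ⊗ₜ (1 : H))) ∧
  ((TensorProduct.comm k H H) R) * R = 1

/-- `bcomp U V x y = (U x) ∘ₗ (V y)`, bilinearly in `x, y`. -/
noncomputable def bcomp {A B C : Type*} [AddCommMonoid A] [AddCommMonoid B] [AddCommMonoid C]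
    [Module k A] [Module k B] [Module k C]
    (U : H →ₗ[k] B →ₗ[k] C) (V : H →ₗ[k] A →ₗ[k] B) : H →ₗ[k] H →ₗ[k] (A →ₗ[k] C) :=
  ((((LinearMap.llcomp k A B C) ∘ₗ U).flip) ∘ₗ V).flip

/-- Given an action `α` of `H` on `M`, the induced action of `H ⊗ H` on `M ⊗ M`:
`pairAct α (x ⊗ y) (a ⊗ b) = (α x a) ⊗ (α y b)`. -/
noncomputable def pairAct {M : Type*} [AddCommMonoid M] [Module k M]
    (α : H →ₗ[k] M →ₗ[k] M) : H ⊗[k] H →ₗ[k] (M ⊗[k] M →ₗ[k] M ⊗[k] M) :=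
  (TensorProduct.homTensorHomMap (RingHom.id k) M M M M) ∘ₗ (TensorProduct.map α α)

/-- `sandwich α β (x ⊗ y) a = α x * a * β y`. -/
noncomputable def sandwich {E : Type*} [Ring E] [Algebra k E]
    (α β : H →ₗ[k] E) : H ⊗[k] H →ₗ[k] E →ₗ[k] E :=
  TensorProduct.lift (bcomp k H ((LinearMap.mul k E) ∘ₗ α) ((LinearMap.mul k E).flip ∘ₗ β))

/-- The adjoint action associated with `ρ : H →ₗ E`:
`adAct ρ h a = Σ ρ(h⁽¹⁾) a ρ(γ(h⁽²⁾))`. -/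
noncomputable def adAct {E : Type*} [Ring E] [Algebra k E]
    (ρ : H →ₗ[k] E) : H →ₗ[k] E →ₗ[k] E :=
  (sandwich k H ρ (ρ ∘ₗ anti k H)) ∘ₗ comulL k H

/-- The twisted comultiplication `Δ̃(h) = F⁻¹ Δ(h) F`. -/
noncomputable def comulTw (F Finv : H ⊗[k] H) : H →ₗ[k] H ⊗[k] H :=
  (LinearMap.mulRight k F) ∘ₗ (LinearMap.mulLeft k Finv) ∘ₗ comulL k H

/-- The twisted antipode `γ̃(h) = ϑ⁻¹ γ(h) ϑ`. -/
noncomputable def antiTw (ϑ ϑinv : H) : H →ₗ[k] H :=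
  (LinearMap.mulRight k ϑ) ∘ₗ (LinearMap.mulLeft k ϑinv) ∘ₗ anti k H

variable (A : Type*) [Ring A] [Algebra k A]

/-- `act` makes `A` a left `H`-module algebra:
`act` is a representation of `H`, `h•(ab) = Σ (h⁽¹⁾•a)(h⁽²⁾•b)` and `h•1 = ε(h)1`. -/
def IsModAlg (act : H →ₗ[k] Module.End k A) : Prop :=
  act 1 = 1 ∧ (∀ g h : H, act (g * h) = act g * act h) ∧
  (∀ (h : H) (a b : A),
    act h (a * b) = LinearMap.mul' k A ((pairAct k H act) (comulL k H h) (a ⊗ₜ b))) ∧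
  (∀ h : H, act h 1 = (counitL k H h) • (1 : A))

/-- The adjoint-type action of `H` on `End_k(A)`: `h.X = Σ ρ(h⁽¹⁾) ∘ X ∘ ρ(γ(h⁽²⁾))`. -/
noncomputable def dotAct (act : H →ₗ[k] Module.End k A) :
    H →ₗ[k] Module.End k A →ₗ[k] Module.End k A :=
  (sandwich k H (E := Module.End k A) act (act ∘ₗ anti k H)) ∘ₗ comulL k H

set_option synthInstance.maxHeartbeats 400000
set_option maxHeartbeats 1000000
open TensorProduct
noncomputable section
namespace CotwistAux
variable {k : Type*} [Field k] {H : Type*} [Ring H] [HopfAlgebra k H]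

local notation "Δ" => (Coalgebra.comul (R := k) (A := H))
local notation "ε" => (Coalgebra.counit (R := k) (A := H))
local notation "γ" => (HopfAlgebra.antipode (R := k) (A := H))
local notation "m" => (LinearMap.mul' k H)

/-- convolution on maps `H ⊗ H →ₗ H`, using the tensor-product coalgebra structure. -/
def conv (f g : H ⊗[k] H →ₗ[k] H) : H ⊗[k] H →ₗ[k] H :=
  LinearMap.mul' k H ∘ₗ TensorProduct.map f g ∘ₗ Coalgebra.comul

lemma conv_tmul (f g : H ⊗[k] H →ₗ[k] H) (x y : H) :
    conv f g (x ⊗ₜ y) = LinearMap.mul' k H (TensorProduct.map f g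
      (TensorProduct.tensorTensorTensorComm k H H H H (Δ x ⊗ₜ Δ y))) := rfl

/-- the "three-slot" collapse map. -/
def T3 (f g h : H ⊗[k] H →ₗ[k] H) :
    (H ⊗[k] (H ⊗[k] H)) ⊗[k] (H ⊗[k] (H ⊗[k] H)) →ₗ[k] H :=
  LinearMap.mul' k H ∘ₗ
    TensorProduct.map f (LinearMap.mul' k H ∘ₗ TensorProduct.map g h ∘ₗ
      (TensorProduct.tensorTensorTensorComm k H H H H).toLinearMap) ∘ₗ
    (TensorProduct.tensorTensorTensorComm k H (H ⊗[k] H) H (H ⊗[k] H)).toLinearMap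

lemma T3_tmul (f g h : H ⊗[k] H →ₗ[k] H) (a b c d e f' : H) :
    T3 f g h ((a ⊗ₜ (b ⊗ₜ c)) ⊗ₜ (d ⊗ₜ (e ⊗ₜ f'))) =
      f (a ⊗ₜ d) * (g (b ⊗ₜ e) * h (c ⊗ₜ f')) := rfl



local notation "ttc" => (TensorProduct.tensorTensorTensorComm k H H H H)
open LinearMap

lemma left_sub (f g h : H ⊗[k] H →ₗ[k] H) (b d : H) (p q : H ⊗[k] H) :
    LinearMap.mul' k H (TensorProduct.map f g (ttc (p ⊗ₜ q))) * h (b ⊗ₜ d) =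
      T3 f g h ((TensorProduct.assoc k H H H (p ⊗ₜ b)) ⊗ₜ
        (TensorProduct.assoc k H H H (q ⊗ₜ d))) := by
  induction p using TensorProduct.induction_on with
  | zero => simp [TensorProduct.zero_tmul]
  | tmul a₁ a₂ =>
    induction q using TensorProduct.induction_on with
    | zero => simp [TensorProduct.zero_tmul, TensorProduct.tmul_zero]
    | tmul c₁ c₂ => simp [T3_tmul, mul_assoc]
    | add q₁ q₂ h₁ h₂ =>
      simp only [TensorProduct.tmul_add, TensorProduct.add_tmul, map_add, add_mul,
        LinearMap.add_apply, h₁, h₂]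
  | add p₁ p₂ h₁ h₂ =>
    simp only [TensorProduct.tmul_add, TensorProduct.add_tmul, map_add, add_mul,
      LinearMap.add_apply, h₁, h₂]


lemma left_eval (f g h : H ⊗[k] H →ₗ[k] H) (u v : H ⊗[k] H) :
    LinearMap.mul' k H (TensorProduct.map (conv f g) h (ttc (u ⊗ₜ v))) =
      T3 f g h ((TensorProduct.assoc k H H H (LinearMap.rTensor H Δ u)) ⊗ₜ
        (TensorProduct.assoc k H H H (LinearMap.rTensor H Δ v))) := by
  induction u using TensorProduct.induction_on with
  | zero => simp [TensorProduct.zero_tmul]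
  | tmul a b =>
    induction v using TensorProduct.induction_on with
    | zero => simp [TensorProduct.zero_tmul, TensorProduct.tmul_zero]
    | tmul c d =>
      simpa [conv_tmul] using left_sub f g h b d (Δ a) (Δ c)
    | add v₁ v₂ h₁ h₂ =>
      simp only [TensorProduct.tmul_add, TensorProduct.add_tmul, map_add,
        LinearMap.add_apply, h₁, h₂]
  | add u₁ u₂ h₁ h₂ =>
    simp only [TensorProduct.tmul_add, TensorProduct.add_tmul, map_add,
      LinearMap.add_apply, h₁, h₂]

lemma right_sub (f g h : H ⊗[k] H →ₗ[k] H) (a c : H) (p q : H ⊗[k] H) :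
    f (a ⊗ₜ c) * LinearMap.mul' k H (TensorProduct.map g h (ttc (p ⊗ₜ q))) =
      T3 f g h ((a ⊗ₜ p) ⊗ₜ (c ⊗ₜ q)) := by
  induction p using TensorProduct.induction_on with
  | zero => simp [TensorProduct.zero_tmul, TensorProduct.tmul_zero]
  | tmul b₁ b₂ =>
    induction q using TensorProduct.induction_on with
    | zero => simp [TensorProduct.zero_tmul, TensorProduct.tmul_zero]
    | tmul d₁ d₂ => simp [T3_tmul]
    | add q₁ q₂ h₁ h₂ =>
      simp only [TensorProduct.tmul_add, TensorProduct.add_tmul, map_add, mul_add,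
        LinearMap.add_apply, h₁, h₂]
  | add p₁ p₂ h₁ h₂ =>
    simp only [TensorProduct.tmul_add, TensorProduct.add_tmul, map_add, mul_add,
      LinearMap.add_apply, h₁, h₂]

lemma right_eval (f g h : H ⊗[k] H →ₗ[k] H) (u v : H ⊗[k] H) :
    LinearMap.mul' k H (TensorProduct.map f (conv g h) (ttc (u ⊗ₜ v))) =
      T3 f g h ((LinearMap.lTensor H Δ u) ⊗ₜ (LinearMap.lTensor H Δ v)) := by
  induction u using TensorProduct.induction_on with
  | zero => simp [TensorProduct.zero_tmul]
  | tmul a b =>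
    induction v using TensorProduct.induction_on with
    | zero => simp [TensorProduct.zero_tmul, TensorProduct.tmul_zero]
    | tmul c d =>
      simpa [conv_tmul] using right_sub f g h a c (Δ b) (Δ d)
    | add v₁ v₂ h₁ h₂ =>
      simp only [TensorProduct.tmul_add, TensorProduct.add_tmul, map_add,
        LinearMap.add_apply, h₁, h₂]
  | add u₁ u₂ h₁ h₂ =>
    simp only [TensorProduct.tmul_add, TensorProduct.add_tmul, map_add,
      LinearMap.add_apply, h₁, h₂]

lemma conv_assoc (f g h : H ⊗[k] H →ₗ[k] H) :
    conv (conv f g) h = conv f (conv g h) := by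
  apply TensorProduct.ext'
  intro x y
  rw [conv_tmul, conv_tmul, left_eval, right_eval,
    Coalgebra.coassoc_apply, Coalgebra.coassoc_apply]


/-- the convolution unit `u ∘ ε` on `H ⊗ H`. -/
def uE (k : Type*) [Field k] (H : Type*) [Ring H] [HopfAlgebra k H] : H ⊗[k] H →ₗ[k] H :=
  Algebra.linearMap k H ∘ₗ (Coalgebra.counit (R := k) (A := H ⊗[k] H))

lemma uE_tmul (a b : H) : (uE k H (a ⊗ₜ b) : H) =
    algebraMap k H (Coalgebra.counit (R := k) a * Coalgebra.counit (R := k) b) := by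
  simp [uE, CoalgebraStruct.counit]
  exact Algebra.commutes _ _

/-- counit collapse on the left. -/
def cL (k : Type*) [Field k] (H : Type*) [Ring H] [HopfAlgebra k H] : H ⊗[k] H →ₗ[k] H :=
  (TensorProduct.lid k H).toLinearMap ∘ₗ LinearMap.rTensor H (Coalgebra.counit (R := k) (A := H))

/-- counit collapse on the right. -/
def cR (k : Type*) [Field k] (H : Type*) [Ring H] [HopfAlgebra k H] : H ⊗[k] H →ₗ[k] H :=
  (TensorProduct.rid k H).toLinearMap ∘ₗ LinearMap.lTensor H (Coalgebra.counit (R := k) (A := H))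

lemma cL_comul (x : H) : cL k H (Δ x) = x := by
  simp [cL, Coalgebra.rTensor_counit_comul]

lemma cR_comul (x : H) : cR k H (Δ x) = x := by
  simp [cR, Coalgebra.lTensor_counit_comul]

lemma ul_sub (f : H ⊗[k] H →ₗ[k] H) (u v : H ⊗[k] H) :
    LinearMap.mul' k H (TensorProduct.map (uE k H) f (ttc (u ⊗ₜ v))) = f (cL k H u ⊗ₜ cL k H v) := by
  induction u using TensorProduct.induction_on with
  | zero => simp [TensorProduct.zero_tmul]
  | tmul a b =>
    induction v using TensorProduct.induction_on with
    | zero => simp [TensorProduct.zero_tmul, TensorProduct.tmul_zero]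
    | tmul c d =>
      simp [uE_tmul, cL, ← Algebra.smul_def, ← TensorProduct.smul_tmul',
        TensorProduct.tmul_smul, smul_smul, mul_comm]
    | add v₁ v₂ h₁ h₂ =>
      simp only [TensorProduct.tmul_add, TensorProduct.add_tmul, map_add,
        LinearMap.add_apply, h₁, h₂]
  | add u₁ u₂ h₁ h₂ =>
    simp only [TensorProduct.tmul_add, TensorProduct.add_tmul, map_add,
      LinearMap.add_apply, h₁, h₂]

lemma ur_sub (f : H ⊗[k] H →ₗ[k] H) (u v : H ⊗[k] H) :
    LinearMap.mul' k H (TensorProduct.map f (uE k H) (ttc (u ⊗ₜ v))) = f (cR k H u ⊗ₜ cR k H v) := by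
  induction u using TensorProduct.induction_on with
  | zero => simp [TensorProduct.zero_tmul]
  | tmul a b =>
    induction v using TensorProduct.induction_on with
    | zero => simp [TensorProduct.zero_tmul, TensorProduct.tmul_zero]
    | tmul c d =>
      have hc : ∀ (x : H) (r : k), x * algebraMap k H r = r • x := fun x r => by
        rw [Algebra.smul_def, Algebra.commutes]
      simp [uE_tmul, cR, hc, ← TensorProduct.smul_tmul', TensorProduct.tmul_smul,
        smul_smul, mul_comm]
    | add v₁ v₂ h₁ h₂ =>
      simp only [TensorProduct.tmul_add, TensorProduct.add_tmul, map_add,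
        LinearMap.add_apply, h₁, h₂]
  | add u₁ u₂ h₁ h₂ =>
    simp only [TensorProduct.tmul_add, TensorProduct.add_tmul, map_add,
      LinearMap.add_apply, h₁, h₂]

lemma conv_unit_left (f : H ⊗[k] H →ₗ[k] H) : conv (uE k H) f = f := by
  apply TensorProduct.ext'
  intro x y
  rw [conv_tmul, ul_sub, cL_comul, cL_comul]

lemma conv_unit_right (f : H ⊗[k] H →ₗ[k] H) : conv f (uE k H) = f := by
  apply TensorProduct.ext'
  intro x y
  rw [conv_tmul, ur_sub, cR_comul, cR_comul]

/-- `x ⊗ y ↦ γ(y)γ(x)`. -/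
def Tm (k : Type*) [Field k] (H : Type*) [Ring H] [HopfAlgebra k H] : H ⊗[k] H →ₗ[k] H :=
  LinearMap.mul' k H ∘ₗ TensorProduct.map (HopfAlgebra.antipode (R := k))
    (HopfAlgebra.antipode (R := k)) ∘ₗ (TensorProduct.comm k H H).toLinearMap

/-- `x ⊗ y ↦ γ(xy)`. -/
def Sm (k : Type*) [Field k] (H : Type*) [Ring H] [HopfAlgebra k H] : H ⊗[k] H →ₗ[k] H :=
  (HopfAlgebra.antipode (R := k) (A := H)) ∘ₗ LinearMap.mul' k H

lemma Tm_tmul (x y : H) : Tm k H (x ⊗ₜ y) =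
    HopfAlgebra.antipode (R := k) y * HopfAlgebra.antipode (R := k) x := rfl

lemma Sm_tmul (x y : H) : Sm k H (x ⊗ₜ y) = HopfAlgebra.antipode (R := k) (x * y) := rfl

lemma sandwich_tmul {E : Type*} [Ring E] [Algebra k E] (α β : H →ₗ[k] E) (x y : H) (a : E) :
    sandwich k H α β (x ⊗ₜ y) a = α x * a * β y := by simp [sandwich, bcomp, mul_assoc]

lemma c1_sub (u v : H ⊗[k] H) :
    LinearMap.mul' k H (TensorProduct.map (Sm k H) (LinearMap.mul' k H) (ttc (u ⊗ₜ v))) =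
      LinearMap.mul' k H (LinearMap.rTensor H γ (u * v)) := by
  induction u using TensorProduct.induction_on with
  | zero => simp [TensorProduct.zero_tmul]
  | tmul a b =>
    induction v using TensorProduct.induction_on with
    | zero => simp [TensorProduct.zero_tmul, TensorProduct.tmul_zero]
    | tmul c d => simp [Sm, Algebra.TensorProduct.tmul_mul_tmul]
    | add v₁ v₂ h₁ h₂ =>
      simp only [TensorProduct.tmul_add, TensorProduct.add_tmul, map_add, mul_add,
        LinearMap.add_apply, h₁, h₂]
  | add u₁ u₂ h₁ h₂ =>
    simp only [TensorProduct.tmul_add, TensorProduct.add_tmul, map_add, add_mul,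
      LinearMap.add_apply, h₁, h₂]

lemma c1 : conv (Sm k H) (LinearMap.mul' k H) = uE k H := by
  apply TensorProduct.ext'
  intro x y
  rw [conv_tmul, c1_sub, ← Bialgebra.comul_mul, HopfAlgebra.mul_antipode_rTensor_comul_apply,
    Bialgebra.counit_mul, uE_tmul]

lemma E1 (u v : H ⊗[k] H) :
    LinearMap.mul' k H (TensorProduct.map (LinearMap.mul' k H) (Tm k H) (ttc (u ⊗ₜ v))) =
      sandwich k H LinearMap.id (anti k H) u
        (LinearMap.mul' k H (LinearMap.lTensor H γ v)) := by
  induction u using TensorProduct.induction_on with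
  | zero => simp [TensorProduct.zero_tmul]
  | tmul a b =>
    induction v using TensorProduct.induction_on with
    | zero => simp [TensorProduct.zero_tmul, TensorProduct.tmul_zero]
    | tmul c d => simp [Tm, sandwich_tmul, anti, mul_assoc]
    | add v₁ v₂ h₁ h₂ =>
      simp only [TensorProduct.tmul_add, TensorProduct.add_tmul, map_add, mul_add,
        LinearMap.add_apply, h₁, h₂]
  | add u₁ u₂ h₁ h₂ =>
    simp only [TensorProduct.tmul_add, TensorProduct.add_tmul, map_add, add_mul, mul_add,
      LinearMap.add_apply, h₁, h₂]

lemma E2 (u : H ⊗[k] H) (r : k) :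
    sandwich k H LinearMap.id (anti k H) u (algebraMap k H r) =
      r • LinearMap.mul' k H (LinearMap.lTensor H γ u) := by
  induction u using TensorProduct.induction_on with
  | zero => simp
  | tmul a b =>
    have hc : ∀ (x : H), x * algebraMap k H r = r • x := fun x => by
      rw [Algebra.smul_def, Algebra.commutes]
    simp [sandwich_tmul, anti, hc, smul_mul_assoc]
  | add u₁ u₂ h₁ h₂ => simp only [map_add, LinearMap.add_apply, h₁, h₂, smul_add]

lemma c2 : conv (LinearMap.mul' k H) (Tm k H) = uE k H := by
  apply TensorProduct.ext'
  intro x y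
  rw [conv_tmul, E1, HopfAlgebra.mul_antipode_lTensor_comul_apply, E2,
    HopfAlgebra.mul_antipode_lTensor_comul_apply, uE_tmul, Algebra.smul_def,
    ← map_mul, mul_comm]

lemma antipode_one' : (HopfAlgebra.antipode (R := k) (A := H)) 1 = 1 := by
  have h := HopfAlgebra.mul_antipode_rTensor_comul_apply (R := k) (A := H) 1
  simpa [Algebra.TensorProduct.one_def] using h

lemma antipode_mul' (a b : H) :
    (HopfAlgebra.antipode (R := k) (A := H)) (a * b) =
      HopfAlgebra.antipode (R := k) b * HopfAlgebra.antipode (R := k) a := by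
  have key : (Sm k H) = Tm k H := by
    calc (Sm k H) = conv (Sm k H) (uE k H) := (conv_unit_right _).symm
      _ = conv (Sm k H) (conv (LinearMap.mul' k H) (Tm k H)) := by rw [c2]
      _ = conv (conv (Sm k H) (LinearMap.mul' k H)) (Tm k H) := (conv_assoc _ _ _).symm
      _ = conv (uE k H) (Tm k H) := by rw [c1]
      _ = Tm k H := conv_unit_left _
  exact LinearMap.congr_fun key (a ⊗ₜ b)

/-- `x ⊗ y ↦ Σ x⁽¹⁾ ⊗ γ(x⁽²⁾) y`. -/
def Wmap (k : Type*) [Field k] (H : Type*) [Ring H] [HopfAlgebra k H] :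
    H ⊗[k] H →ₗ[k] H ⊗[k] H :=
  (TensorProduct.map LinearMap.id
      (LinearMap.mul' k H ∘ₗ TensorProduct.map (HopfAlgebra.antipode (R := k)) LinearMap.id)) ∘ₗ
    (TensorProduct.assoc k H H H).toLinearMap ∘ₗ
    (TensorProduct.map (Coalgebra.comul (R := k)) LinearMap.id)

/-- `x ⊗ (y ⊗ z) ↦ x ⊗ γ(y) z`. -/
def Qmap (k : Type*) [Field k] (H : Type*) [Ring H] [HopfAlgebra k H] :
    H ⊗[k] (H ⊗[k] H) →ₗ[k] H ⊗[k] H :=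
  TensorProduct.map LinearMap.id
    (LinearMap.mul' k H ∘ₗ TensorProduct.map (HopfAlgebra.antipode (R := k)) LinearMap.id)

/-- `(x ⊗ y) ↦ (W ↦ (1 ⊗ γ(y)) W (x ⊗ 1))`. -/
def Gfun (k : Type*) [Field k] (H : Type*) [Ring H] [HopfAlgebra k H] :
    H ⊗[k] H →ₗ[k] (H ⊗[k] H) →ₗ[k] (H ⊗[k] H) :=
  (sandwich k H (E := H ⊗[k] H)
      ((TensorProduct.mk k H H 1) ∘ₗ (HopfAlgebra.antipode (R := k)))
      ((TensorProduct.mk k H H).flip 1)) ∘ₗ (TensorProduct.comm k H H).toLinearMap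

/-- `x ⊗ y ↦ x ⊗ γ(y) t`. -/
def Xi (k : Type*) [Field k] (H : Type*) [Ring H] [HopfAlgebra k H] (t : H) :
    H ⊗[k] H →ₗ[k] H ⊗[k] H :=
  TensorProduct.map LinearMap.id
    ((LinearMap.mulRight k t) ∘ₗ (HopfAlgebra.antipode (R := k)))

lemma Wmap_tmul (x y : H) : Wmap k H (x ⊗ₜ y) =
    Qmap k H (TensorProduct.assoc k H H H (Δ x ⊗ₜ y)) := rfl

lemma Qmap_tmul (x y z : H) : Qmap k H (x ⊗ₜ (y ⊗ₜ z)) = x ⊗ₜ (γ y * z) := rfl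

lemma Xi_tmul (t x y : H) : Xi k H t (x ⊗ₜ y) = x ⊗ₜ (γ y * t) := rfl

lemma Gfun_tmul (x y : H) (W : H ⊗[k] H) :
    Gfun k H (x ⊗ₜ y) W = ((1 : H) ⊗ₜ γ y) * W * (x ⊗ₜ (1 : H)) := by
  simp [Gfun, sandwich_tmul]

lemma G_one (W : H ⊗[k] H) : Gfun k H ((1 : H) ⊗ₜ (1 : H)) W = W := by
  rw [Gfun_tmul, antipode_one', ← Algebra.TensorProduct.one_def, one_mul, mul_one]

lemma G_mul (u v W : H ⊗[k] H) :
    Gfun k H (u * v) W = Gfun k H v (Gfun k H u W) := by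
  induction u using TensorProduct.induction_on with
  | zero => simp
  | tmul a b =>
    induction v using TensorProduct.induction_on with
    | zero => simp
    | tmul c d =>
      rw [Algebra.TensorProduct.tmul_mul_tmul, Gfun_tmul, Gfun_tmul, Gfun_tmul, antipode_mul']
      have e₁ : (1 : H) ⊗ₜ[k] (γ d * γ b) = ((1 : H) ⊗ₜ[k] γ d) * ((1 : H) ⊗ₜ[k] γ b) := by
        rw [Algebra.TensorProduct.tmul_mul_tmul, one_mul]
      have e₂ : (a * c) ⊗ₜ[k] (1 : H) = (a ⊗ₜ[k] (1 : H)) * (c ⊗ₜ[k] (1 : H)) := by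
        rw [Algebra.TensorProduct.tmul_mul_tmul, mul_one]
      rw [e₁, e₂]
      noncomm_ring
    | add v₁ v₂ h₁ h₂ => simp only [mul_add, map_add, LinearMap.add_apply, h₁, h₂]
  | add u₁ u₂ h₁ h₂ => simp only [add_mul, map_add, LinearMap.add_apply, h₁, h₂]

lemma L3a_sub (y c d : H) (p : H ⊗[k] H) :
    Qmap k H (TensorProduct.assoc k H H H ((p * (c ⊗ₜ d)) ⊗ₜ y)) =
      Gfun k H (c ⊗ₜ d) (Qmap k H (TensorProduct.assoc k H H H (p ⊗ₜ y))) := by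
  induction p using TensorProduct.induction_on with
  | zero => simp [TensorProduct.zero_tmul]
  | tmul p₁ p₂ =>
    simp [Qmap_tmul, Gfun_tmul, Algebra.TensorProduct.tmul_mul_tmul, antipode_mul', mul_assoc]
  | add p₁ p₂ h₁ h₂ =>
    simp only [add_mul, TensorProduct.add_tmul, map_add, h₁, h₂]

lemma L3a (u v : H ⊗[k] H) :
    Qmap k H (TensorProduct.assoc k H H H
        ((TensorProduct.map (Coalgebra.comul (R := k)) LinearMap.id u) * (v ⊗ₜ (1 : H)))) =
      Gfun k H v (Wmap k H u) := by
  induction u using TensorProduct.induction_on with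
  | zero => simp [TensorProduct.zero_tmul]
  | tmul x y =>
    induction v using TensorProduct.induction_on with
    | zero => simp [TensorProduct.zero_tmul]
    | tmul c d =>
      simp only [TensorProduct.map_tmul, LinearMap.id_coe, id_eq, Wmap_tmul,
        Algebra.TensorProduct.tmul_mul_tmul, mul_one]
      exact L3a_sub y c d (Δ x)
    | add v₁ v₂ h₁ h₂ =>
      simp only [TensorProduct.add_tmul, mul_add, map_add, LinearMap.add_apply, h₁, h₂]
  | add u₁ u₂ h₁ h₂ =>
    simp only [add_mul, TensorProduct.add_tmul, map_add, LinearMap.add_apply, h₁, h₂]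

lemma L3b_sub (c d : H) (p : H ⊗[k] H) :
    LinearMap.mul' k H (TensorProduct.map (HopfAlgebra.antipode (R := k)) LinearMap.id
        (p * (c ⊗ₜ d))) =
      γ c * LinearMap.mul' k H
        (TensorProduct.map (HopfAlgebra.antipode (R := k)) LinearMap.id p) * d := by
  induction p using TensorProduct.induction_on with
  | zero => simp
  | tmul p₁ p₂ =>
    simp [Algebra.TensorProduct.tmul_mul_tmul, antipode_mul', mul_assoc]
  | add p₁ p₂ h₁ h₂ =>
    simp only [add_mul, map_add, h₁, h₂, mul_add]

lemma L3b (u v : H ⊗[k] H) :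
    Qmap k H ((TensorProduct.map LinearMap.id (Coalgebra.comul (R := k)) u) * ((1 : H) ⊗ₜ v)) =
      (TensorProduct.rid k H (TensorProduct.map LinearMap.id (Coalgebra.counit (R := k)) u)) ⊗ₜ
        (LinearMap.mul' k H
          (TensorProduct.map (HopfAlgebra.antipode (R := k)) LinearMap.id v)) := by
  induction u using TensorProduct.induction_on with
  | zero => simp [TensorProduct.zero_tmul]
  | tmul x y =>
    induction v using TensorProduct.induction_on with
    | zero => simp [TensorProduct.tmul_zero]
    | tmul c d =>
      simp only [TensorProduct.map_tmul, LinearMap.id_coe, id_eq,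
        Algebra.TensorProduct.tmul_mul_tmul, one_mul, mul_one]
      have hq : ∀ w : H ⊗[k] H, Qmap k H (x ⊗ₜ w) =
          x ⊗ₜ LinearMap.mul' k H
            (TensorProduct.map (HopfAlgebra.antipode (R := k)) LinearMap.id w) := by
        intro w
        induction w using TensorProduct.induction_on with
        | zero => simp [TensorProduct.tmul_zero, Qmap]
        | tmul w₁ w₂ => rfl
        | add w₁ w₂ g₁ g₂ => simp only [TensorProduct.tmul_add, map_add, g₁, g₂]
      rw [hq, L3b_sub]
      rw [show (TensorProduct.map (HopfAlgebra.antipode (R := k) (A := H)) LinearMap.id) =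
        LinearMap.rTensor H (HopfAlgebra.antipode (R := k) (A := H)) from rfl,
        HopfAlgebra.mul_antipode_rTensor_comul_apply]
      have hmid : γ c * algebraMap k H (Coalgebra.counit (R := k) y) * d =
          Coalgebra.counit (R := k) y • (γ c * d) := by
        rw [← Algebra.commutes, mul_assoc, ← Algebra.smul_def]
      rw [hmid, TensorProduct.tmul_smul, TensorProduct.rid_tmul, TensorProduct.smul_tmul',
        LinearMap.mul'_apply]
    | add v₁ v₂ h₁ h₂ =>
      simp only [TensorProduct.tmul_add, mul_add, map_add, h₁, h₂]
  | add u₁ u₂ h₁ h₂ =>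
    simp only [TensorProduct.add_tmul, add_mul, map_add, LinearMap.add_apply, h₁, h₂]

lemma L4e (t : H) (v : H ⊗[k] H) :
    Gfun k H v ((1 : H) ⊗ₜ t) = Xi k H t v := by
  induction v using TensorProduct.induction_on with
  | zero => simp
  | tmul c d =>
    rw [Gfun_tmul, Xi_tmul, Algebra.TensorProduct.tmul_mul_tmul,
      Algebra.TensorProduct.tmul_mul_tmul]
    rw [one_mul, one_mul, mul_one]
  | add v₁ v₂ h₁ h₂ => simp only [map_add, LinearMap.add_apply, h₁, h₂]

lemma L3 (F Finv : H ⊗[k] H) (hF : IsCocycle k H F Finv) :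
    Gfun k H F (Wmap k H F) = (1 : H) ⊗ₜ theta k H F := by
  have h3 := hF.2.2.1
  have h4 := hF.2.2.2.2
  unfold comulL at h3
  unfold counitL at h4
  have := congrArg (Qmap k H) h3
  rw [L3a, L3b, h4] at this
  rw [this]
  rfl

lemma L4 (F Finv : H ⊗[k] H) (hF : IsCocycle k H F Finv) :
    Wmap k H F = Xi k H (theta k H F) Finv := by
  calc Wmap k H F = Gfun k H ((1 : H) ⊗ₜ (1 : H)) (Wmap k H F) := (G_one _).symm
    _ = Gfun k H (F * Finv) (Wmap k H F) := by
        rw [← Algebra.TensorProduct.one_def, hF.1]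
    _ = Gfun k H Finv (Gfun k H F (Wmap k H F)) := G_mul _ _ _
    _ = Gfun k H Finv ((1 : H) ⊗ₜ theta k H F) := by rw [L3 F Finv hF]
    _ = Xi k H (theta k H F) Finv := L4e _ _

variable {E : Type*} [Ring E] [Algebra k E]

lemma L5_sub (ρ : H →ₐ[k] E) (y : H) (a : E) (p : H ⊗[k] H) :
    sandwich k H ρ.toLinearMap (ρ.toLinearMap ∘ₗ anti k H) p a * ρ y =
      sandwich k H ρ.toLinearMap ρ.toLinearMap
        (Qmap k H (TensorProduct.assoc k H H H (p ⊗ₜ y))) a := by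
  induction p using TensorProduct.induction_on with
  | zero => simp [TensorProduct.zero_tmul]
  | tmul p₁ p₂ =>
    simp [sandwich_tmul, Qmap_tmul, anti, map_mul, mul_assoc]
  | add p₁ p₂ h₁ h₂ =>
    simp only [TensorProduct.add_tmul, map_add, LinearMap.add_apply, add_mul, h₁, h₂]

lemma L5 (ρ : H →ₐ[k] E) (u : H ⊗[k] H) (a : E) :
    TensorProduct.lift
      ((bcomp k H ((LinearMap.mul k E).flip ∘ₗ ρ.toLinearMap) (adAct k H ρ.toLinearMap)).flip) u a
      = sandwich k H ρ.toLinearMap ρ.toLinearMap (Wmap k H u) a := by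
  induction u using TensorProduct.induction_on with
  | zero => simp
  | tmul x y =>
    have h1 : TensorProduct.lift
        ((bcomp k H ((LinearMap.mul k E).flip ∘ₗ ρ.toLinearMap)
          (adAct k H ρ.toLinearMap)).flip) (x ⊗ₜ y) a
        = adAct k H ρ.toLinearMap x a * ρ y := rfl
    rw [h1, Wmap_tmul]
    have h2 : adAct k H ρ.toLinearMap x a =
        sandwich k H ρ.toLinearMap (ρ.toLinearMap ∘ₗ anti k H) (Δ x) a := rfl
    rw [h2, L5_sub]
  | add u₁ u₂ h₁ h₂ => simp only [map_add, LinearMap.add_apply, h₁, h₂]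

lemma C2 (ρ : H →ₐ[k] E) (t tinv : H) (ht : t * tinv = 1) (u v : H ⊗[k] H) (a : E) :
    sandwich k H ρ.toLinearMap (ρ.toLinearMap ∘ₗ antiTw k H t tinv) u
        (sandwich k H ρ.toLinearMap ρ.toLinearMap (Xi k H t v) a)
      = sandwich k H ρ.toLinearMap ρ.toLinearMap (Xi k H t (u * v)) a := by
  have hmid : ∀ z : E, ρ t * (ρ tinv * z) = z := fun z => by
    rw [← mul_assoc, ← map_mul, ht, map_one, one_mul]
  induction u using TensorProduct.induction_on with
  | zero => simp
  | tmul x y =>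
    induction v using TensorProduct.induction_on with
    | zero => simp
    | tmul c d =>
      simp [sandwich_tmul, Xi_tmul, antiTw, anti, Algebra.TensorProduct.tmul_mul_tmul,
        antipode_mul', map_mul, mul_assoc, hmid]
    | add v₁ v₂ h₁ h₂ =>
      simp only [mul_add, map_add, LinearMap.add_apply, h₁, h₂]
  | add u₁ u₂ h₁ h₂ =>
    simp only [add_mul, map_add, LinearMap.add_apply, h₁, h₂]

lemma C3 (ρ : H →ₐ[k] E) (t : H) (u v : H ⊗[k] H) (a : E) :
    sandwich k H ρ.toLinearMap ρ.toLinearMap (Xi k H t v)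
        (sandwich k H ρ.toLinearMap (ρ.toLinearMap ∘ₗ anti k H) u a)
      = sandwich k H ρ.toLinearMap ρ.toLinearMap (Xi k H t (v * u)) a := by
  induction u using TensorProduct.induction_on with
  | zero => simp
  | tmul x y =>
    induction v using TensorProduct.induction_on with
    | zero => simp
    | tmul c d =>
      simp [sandwich_tmul, Xi_tmul, anti, Algebra.TensorProduct.tmul_mul_tmul,
        antipode_mul', map_mul, mul_assoc]
    | add v₁ v₂ h₁ h₂ =>
      simp only [add_mul, map_add, LinearMap.add_apply, h₁, h₂]
  | add u₁ u₂ h₁ h₂ =>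
    simp only [mul_add, map_add, LinearMap.add_apply, h₁, h₂]

end CotwistAux
/-- The isomorphism `φ : a ↦ Σ ad(F₁)(a)·ρ(F₂)` intertwines the adjoint
actions of `H` and of the twisted Hopf algebra `H̃` on `E`:
`Σ ρ(h⁽¹̃⁾)·φ(a)·ρ(γ̃(h⁽²̃⁾)) = φ(Σ ρ(h⁽¹⁾)·a·ρ(γ(h⁽²⁾)))`. -/
theorem cotwist_phi_intertwines
    (F Finv : H ⊗[k] H) (hF : IsCocycle k H F Finv)
    (ϑinv : H) (hϑ1 : theta k H F * ϑinv = 1) (hϑ2 : ϑinv * theta k H F = 1)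
    (E : Type*) [Ring E] [Algebra k E] (ρ : H →ₐ[k] E)
    (φ : E →ₗ[k] E)
    (hφ : φ = TensorProduct.lift
      ((bcomp k H ((LinearMap.mul k E).flip ∘ₗ ρ.toLinearMap) (adAct k H ρ.toLinearMap)).flip) F) :
    ∀ (h : H) (a : E),
      ((sandwich k H ρ.toLinearMap
          (ρ.toLinearMap ∘ₗ antiTw k H (theta k H F) ϑinv)) ∘ₗ (comulTw k H F Finv)) h (φ a)
      = φ ((adAct k H ρ.toLinearMap) h a) := by
  intro h a
  have hφ' : ∀ b : E, φ b = sandwich k H ρ.toLinearMap ρ.toLinearMap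
      (CotwistAux.Xi k H (theta k H F) Finv) b := by
    intro b
    rw [hφ, CotwistAux.L5, CotwistAux.L4 F Finv hF]
  have hprod : comulTw k H F Finv h * Finv = Finv * Coalgebra.comul (R := k) h := by
    show ((Finv * Coalgebra.comul (R := k) h) * F) * Finv = _
    rw [mul_assoc, hF.1, mul_one]
  have hlhs : ((sandwich k H ρ.toLinearMap
        (ρ.toLinearMap ∘ₗ antiTw k H (theta k H F) ϑinv)) ∘ₗ (comulTw k H F Finv)) h (φ a)
      = sandwich k H ρ.toLinearMap (ρ.toLinearMap ∘ₗ antiTw k H (theta k H F) ϑinv)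
          (comulTw k H F Finv h) (φ a) := rfl
  rw [hlhs, hφ' a, CotwistAux.C2 ρ (theta k H F) ϑinv hϑ1, hprod]
  have hr : adAct k H ρ.toLinearMap h a =
      sandwich k H ρ.toLinearMap (ρ.toLinearMap ∘ₗ anti k H)
        (Coalgebra.comul (R := k) h) a := rfl
  rw [hφ' _, hr, CotwistAux.C3 ρ (theta k H F) (Coalgebra.comul (R := k) h) Finv]

end
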